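/- Let Ω ⊆ ℂⁿ be a domain, p ∈ ∂Ω a k-point with ∂Ω Dini-smooth near p, so that the upper bound k_Ω(z,w) ≤ log(1 + 2‖z-w‖/√(δ_Ω(z)δ_Ω(w))) holds for z,w ∈ Ω near p. Then Ω satisfies the weak Gromov property at p: for every o ∈ Ω and every q ∈ ∂Ω with q ≠ p, liminf_{z→p, w→q}(k_Ω(z,w) - k_Ω(z,o)) > -∞. -/
import Mathlib


open Set Metric Filter Topology MeasureTheory

noncomputable section

/-- Inverse hyperbolic tangent. -/
def artanh (x : ℝ) : ℝ := (1 / 2) * Real.log ((1 + x) / (1 - x))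

variable {n : ℕ}

/-- The extremal quantity `l̃_Ω` in the definition of the Lempert function:
the infimum of `|α|` over holomorphic discs `φ : Δ → Ω` with `φ 0 = z`, `φ α = w`. -/
def lempertT (Ω : Set (EuclideanSpace ℂ (Fin n))) (z w : EuclideanSpace ℂ (Fin n)) : ℝ :=
  sInf {r : ℝ | ∃ (α : ℂ) (φ : ℂ → EuclideanSpace ℂ (Fin n)), r = ‖α‖ ∧ α ∈ ball (0 : ℂ) 1 ∧
    DifferentiableOn ℂ φ (ball (0 : ℂ) 1) ∧ MapsTo φ (ball (0 : ℂ) 1) Ω ∧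
    φ 0 = z ∧ φ α = w}

/-- The Lempert function `l_Ω = artanh l̃_Ω`. -/
def lempert (Ω : Set (EuclideanSpace ℂ (Fin n))) (z w : EuclideanSpace ℂ (Fin n)) : ℝ :=
  artanh (lempertT Ω z w)

/-- The Kobayashi pseudodistance: the largest pseudodistance below the Lempert function,
realized as the infimum over chains. -/
def kobDist (Ω : Set (EuclideanSpace ℂ (Fin n))) (z w : EuclideanSpace ℂ (Fin n)) : ℝ :=
  sInf {r : ℝ | ∃ (m : ℕ) (x : ℕ → EuclideanSpace ℂ (Fin n)), x 0 = z ∧ x m = w ∧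
    (∀ i ≤ m, x i ∈ Ω) ∧ r = ∑ i ∈ Finset.range m, lempert Ω (x i) (x (i + 1))}

/-- The Kobayashi–Royden pseudometric. -/
def kobRoyden (Ω : Set (EuclideanSpace ℂ (Fin n))) (z v : EuclideanSpace ℂ (Fin n)) : ℝ :=
  sInf {r : ℝ | ∃ (c : ℂ) (φ : ℂ → EuclideanSpace ℂ (Fin n)), r = ‖c‖ ∧
    DifferentiableOn ℂ φ (ball (0 : ℂ) 1) ∧ MapsTo φ (ball (0 : ℂ) 1) Ω ∧
    φ 0 = z ∧ c • deriv φ 0 = v}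

/-- The Kobayashi–Royden length of a curve `γ` on `[a,b]`. -/
def kobLength (Ω : Set (EuclideanSpace ℂ (Fin n))) (γ : ℝ → EuclideanSpace ℂ (Fin n))
    (a b : ℝ) : ℝ := ∫ t in a..b, kobRoyden Ω (γ t) (deriv γ t)

/-- An `ε`-geodesic for the Kobayashi length: an (absolutely) continuous curve in `Ω`
whose Kobayashi–Royden length exceeds the Kobayashi distance of its endpoints by at most `ε`. -/
def IsEpsGeodesic (Ω : Set (EuclideanSpace ℂ (Fin n))) (γ : ℝ → EuclideanSpace ℂ (Fin n))
    (a b : ℝ) (ε : ℝ) : Prop :=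
  a ≤ b ∧ ContinuousOn γ (Icc a b) ∧ MapsTo γ (Icc a b) Ω ∧
    kobLength Ω γ a b ≤ kobDist Ω (γ a) (γ b) + ε

/-- The Gromov product with respect to the Kobayashi distance. -/
def gromovK (Ω : Set (EuclideanSpace ℂ (Fin n))) (z w o : EuclideanSpace ℂ (Fin n)) : ℝ :=
  (kobDist Ω z o + kobDist Ω w o - kobDist Ω z w) / 2

/-- `p ∈ ∂Ω` is a `w`-point: for every neighbourhood `U` of `p` with `Ω \ U ≠ ∅`,
`lim_{z,w→p} inf_{o ∈ Ω \ U} (z|w)^Ω_o = ∞`. -/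
def IsWPoint (Ω : Set (EuclideanSpace ℂ (Fin n))) (p : EuclideanSpace ℂ (Fin n)) : Prop :=
  ∀ U ∈ 𝓝 p, (Ω \ U).Nonempty →
    ∀ M : ℝ, ∃ V ∈ 𝓝 p, ∀ z ∈ Ω ∩ V, ∀ w ∈ Ω ∩ V, ∀ o ∈ Ω \ U, M ≤ gromovK Ω z w o

/-- `p ∈ ∂Ω` is a `v`-point: `Ω` satisfies the weak Gromov property at `p`, i.e.
`liminf_{z→p, w→q} (k_Ω(z,w) - k_Ω(z,o)) > -∞` for every `o ∈ Ω` and every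
boundary point `q ≠ p`. -/
def IsVPoint (Ω : Set (EuclideanSpace ℂ (Fin n))) (p : EuclideanSpace ℂ (Fin n)) : Prop :=
  ∀ o ∈ Ω, ∀ q ∈ frontier Ω, q ≠ p →
    ∃ (M : ℝ) (V : Set (EuclideanSpace ℂ (Fin n))) (W : Set (EuclideanSpace ℂ (Fin n))),
      V ∈ 𝓝 p ∧ W ∈ 𝓝 q ∧ ∀ z ∈ Ω ∩ V, ∀ w ∈ Ω ∩ W, M ≤ kobDist Ω z w - kobDist Ω z o

/-- The Euclidean distance to the boundary. -/
def bdist (Ω : Set (EuclideanSpace ℂ (Fin n))) (z : EuclideanSpace ℂ (Fin n)) : ℝ :=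
  Metric.infDist z (frontier Ω)

end

/-- `p ∈ ∂Ω` is a `k`-point: for every neighbourhood `U` of `p`,
`liminf_{z→p} (k_Ω(z, Ω\U) − (1/2)log(1/δ_Ω(z))) > −∞`. -/
def IsKPoint {n : ℕ} (Ω : Set (EuclideanSpace ℂ (Fin n)))
    (p : EuclideanSpace ℂ (Fin n)) : Prop :=
  ∀ U ∈ 𝓝 p, ∃ C : ℝ, ∃ V ∈ 𝓝 p, ∀ z ∈ Ω ∩ V, ∀ o ∈ Ω \ U,
    (1 / 2) * Real.log (1 / bdist Ω z) - C ≤ kobDist Ω z o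

section aux

variable {n : ℕ}

lemma lempert_nonneg (Ω : Set (EuclideanSpace ℂ (Fin n))) (z w : EuclideanSpace ℂ (Fin n)) :
    0 ≤ lempert Ω z w := by
  have h0 : 0 ≤ lempertT Ω z w :=
    Real.sInf_nonneg fun r hr => by
      obtain ⟨α, φ, rfl, -⟩ := hr; exact norm_nonneg α
  have h1 : lempertT Ω z w < 1 := by
    rcases Set.eq_empty_or_nonempty {r : ℝ | ∃ (α : ℂ) (φ : ℂ → EuclideanSpace ℂ (Fin n)),
        r = ‖α‖ ∧ α ∈ Metric.ball (0 : ℂ) 1 ∧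
        DifferentiableOn ℂ φ (Metric.ball (0 : ℂ) 1) ∧
        Set.MapsTo φ (Metric.ball (0 : ℂ) 1) Ω ∧ φ 0 = z ∧ φ α = w} with he | hne
    · rw [lempertT, he, Real.sInf_empty]; norm_num
    · obtain ⟨r, hr⟩ := hne
      have hb : BddBelow {r : ℝ | ∃ (α : ℂ) (φ : ℂ → EuclideanSpace ℂ (Fin n)),
          r = ‖α‖ ∧ α ∈ Metric.ball (0 : ℂ) 1 ∧
          DifferentiableOn ℂ φ (Metric.ball (0 : ℂ) 1) ∧
          Set.MapsTo φ (Metric.ball (0 : ℂ) 1) Ω ∧ φ 0 = z ∧ φ α = w} :=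
        ⟨0, fun s hs => by obtain ⟨α, φ, rfl, -⟩ := hs; exact norm_nonneg α⟩
      have hle : lempertT Ω z w ≤ r := csInf_le hb hr
      obtain ⟨α, φ, rfl, hα, -⟩ := hr
      calc lempertT Ω z w ≤ ‖α‖ := hle
        _ < 1 := by simpa using hα
  rw [lempert, artanh]
  have : (1 : ℝ) ≤ (1 + lempertT Ω z w) / (1 - lempertT Ω z w) :=
    (one_le_div (by linarith)).2 (by linarith)
  nlinarith [Real.log_nonneg this]

lemma chain_sum_nonneg (Ω : Set (EuclideanSpace ℂ (Fin n)))
    {z w : EuclideanSpace ℂ (Fin n)} {r : ℝ}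
    (hr : r ∈ {r : ℝ | ∃ (m : ℕ) (x : ℕ → EuclideanSpace ℂ (Fin n)), x 0 = z ∧ x m = w ∧
      (∀ i ≤ m, x i ∈ Ω) ∧ r = ∑ i ∈ Finset.range m, lempert Ω (x i) (x (i + 1))}) :
    0 ≤ r := by
  obtain ⟨m, x, -, -, -, rfl⟩ := hr
  exact Finset.sum_nonneg fun i _ => lempert_nonneg Ω _ _

lemma kobDist_le_chain (Ω : Set (EuclideanSpace ℂ (Fin n)))
    {z w : EuclideanSpace ℂ (Fin n)} {r : ℝ}
    (hr : r ∈ {r : ℝ | ∃ (m : ℕ) (x : ℕ → EuclideanSpace ℂ (Fin n)), x 0 = z ∧ x m = w ∧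
      (∀ i ≤ m, x i ∈ Ω) ∧ r = ∑ i ∈ Finset.range m, lempert Ω (x i) (x (i + 1))}) :
    kobDist Ω z w ≤ r := by
  unfold kobDist
  exact csInf_le ⟨0, fun s hs => chain_sum_nonneg Ω hs⟩ hr

lemma chainSet_nonempty (Ω : Set (EuclideanSpace ℂ (Fin n)))
    {z w : EuclideanSpace ℂ (Fin n)} (hz : z ∈ Ω) (hw : w ∈ Ω) :
    {r : ℝ | ∃ (m : ℕ) (x : ℕ → EuclideanSpace ℂ (Fin n)), x 0 = z ∧ x m = w ∧
      (∀ i ≤ m, x i ∈ Ω) ∧ r = ∑ i ∈ Finset.range m, lempert Ω (x i) (x (i + 1))}.Nonempty := by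
  refine ⟨lempert Ω z w, 1, fun i => if i = 0 then z else w, by simp, by simp, ?_, by simp⟩
  intro i hi
  by_cases h : i = 0 <;> simp [h, hz, hw]

lemma kobDist_triangle (Ω : Set (EuclideanSpace ℂ (Fin n)))
    {z y w : EuclideanSpace ℂ (Fin n)} (hz : z ∈ Ω) (hy : y ∈ Ω) (hw : w ∈ Ω) :
    kobDist Ω z w ≤ kobDist Ω z y + kobDist Ω y w := by
  refine le_of_forall_pos_le_add fun ε hε => ?_
  obtain ⟨a, haS, ha⟩ := Real.lt_sInf_add_pos (chainSet_nonempty Ω hz hy) (half_pos hε)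
  obtain ⟨b, hbS, hb⟩ := Real.lt_sInf_add_pos (chainSet_nonempty Ω hy hw) (half_pos hε)
  obtain ⟨m, x, hx0, hxm, hxΩ, rfl⟩ := haS
  obtain ⟨m', x', hx'0, hx'm, hx'Ω, rfl⟩ := hbS
  set c : ℕ → EuclideanSpace ℂ (Fin n) := fun i => if i < m then x i else x' (i - m) with hc
  have hmem : (∑ i ∈ Finset.range (m + m'), lempert Ω (c i) (c (i + 1))) ∈
      {r : ℝ | ∃ (k : ℕ) (u : ℕ → EuclideanSpace ℂ (Fin n)), u 0 = z ∧ u k = w ∧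
        (∀ i ≤ k, u i ∈ Ω) ∧
        r = ∑ i ∈ Finset.range k, lempert Ω (u i) (u (i + 1))} := by
    refine ⟨m + m', c, ?_, ?_, ?_, rfl⟩
    · rcases Nat.eq_zero_or_pos m with hm | hm
      · have : z = y := by rw [← hx0, ← hxm, hm]
        simp [hc, hm, hx'0, this]
      · simp [hc, hm, hx0]
    · simp only [hc, Nat.add_sub_cancel_left, if_neg (by omega : ¬ m + m' < m), hx'm]
    · intro i hi
      by_cases h : i < m
      · simpa [hc, h] using hxΩ i h.le
      · simpa [hc, h] using hx'Ω (i - m) (by omega)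
  have hsum : (∑ i ∈ Finset.range (m + m'), lempert Ω (c i) (c (i + 1))) =
      (∑ i ∈ Finset.range m, lempert Ω (x i) (x (i + 1))) +
      ∑ i ∈ Finset.range m', lempert Ω (x' i) (x' (i + 1)) := by
    rw [Finset.sum_range_add]
    congr 1
    · refine Finset.sum_congr rfl fun i hi => ?_
      have hi' : i < m := Finset.mem_range.1 hi
      have h3 : c i = x i := by simp [hc, hi']
      have h4 : c (i + 1) = x (i + 1) := by
        rcases lt_or_eq_of_le (Nat.succ_le_of_lt hi') with h | h
        · simp [hc, h]
        · simp only [hc, if_neg (by omega : ¬ i + 1 < m)]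
          rw [show i + 1 - m = 0 by omega, hx'0, ← hxm, ← h]
      rw [h3, h4]
    · refine Finset.sum_congr rfl fun i hi => ?_
      have h1 : ¬ m + i < m := by omega
      have h2 : ¬ m + i + 1 < m := by omega
      simp only [hc, if_neg h1, if_neg h2, Nat.add_sub_cancel_left,
        show m + i + 1 - m = i + 1 by omega]
  have := kobDist_le_chain Ω hmem
  rw [hsum] at this
  calc kobDist Ω z w ≤ _ := this
    _ ≤ (kobDist Ω z y + ε / 2) + (kobDist Ω y w + ε / 2) := by
        exact add_le_add ha.le hb.le
    _ = kobDist Ω z y + kobDist Ω y w + ε := by ring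

lemma bdist_pos {Ω : Set (EuclideanSpace ℂ (Fin n))} (hΩ : IsOpen Ω)
    {p z : EuclideanSpace ℂ (Fin n)} (hp : p ∈ frontier Ω) (hz : z ∈ Ω) :
    0 < bdist Ω z := by
  have hzf : z ∉ frontier Ω := by
    rw [hΩ.frontier_eq]; exact fun h => h.2 hz
  exact (isClosed_frontier.notMem_iff_infDist_pos ⟨p, hp⟩).1 hzf

end aux

/-- first half of Proposition 5. Let `Ω ⊆ ℂⁿ` be a domain and `p ∈ ∂Ω` a
`k`-point such that the Dini-smooth type upper bound
`k_Ω(z,w) ≤ log(1 + 2‖z−w‖/√(δ_Ω(z)δ_Ω(w)))` holds for `z, w ∈ Ω` near `p`. Then `Ω`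
satisfies the weak Gromov property at `p`, i.e. `p` is a `v`-point. -/
theorem stmt_10 {n : ℕ} (Ω : Set (EuclideanSpace ℂ (Fin n)))
    (hΩ : IsOpen Ω) (hΩc : IsConnected Ω)
    (p : EuclideanSpace ℂ (Fin n)) (hp : p ∈ frontier Ω)
    (hk : IsKPoint Ω p)
    (hdini : ∃ U₀ ∈ 𝓝 p, ∀ z ∈ Ω ∩ U₀, ∀ w ∈ Ω ∩ U₀,
      kobDist Ω z w ≤ Real.log (1 + 2 * ‖z - w‖ / Real.sqrt (bdist Ω z * bdist Ω w))) :
    IsVPoint Ω p := by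
  intro o ho q hq hqp
  obtain ⟨U₀, hU₀, hdini'⟩ := hdini
  have hpΩ : p ∉ Ω := by rw [hΩ.frontier_eq] at hp; exact hp.2
  have hpq : 0 < dist p q := dist_pos.2 (Ne.symm hqp)
  have hpo : 0 < dist p o := dist_pos.2 (fun h => hpΩ (h ▸ ho))
  set r : ℝ := min (dist p q / 2) (dist p o) with hr
  have hrpos : 0 < r := lt_min (by linarith) hpo
  obtain ⟨C, V₁, hV₁, hC⟩ := hk (ball p r) (ball_mem_nhds p hrpos)
  -- pick z₀ ∈ Ω ∩ U₀
  have hpcl : p ∈ closure Ω := by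
    rw [hΩ.frontier_eq] at hp; exact hp.1
  obtain ⟨z₀, hz₀U₀, hz₀Ω⟩ := mem_closure_iff_nhds.1 hpcl U₀ hU₀
  have hd₀ : 0 < bdist Ω z₀ := bdist_pos hΩ hp hz₀Ω
  set d₀ : ℝ := bdist Ω z₀ with hd₀def
  set R : ℝ := 1 + dist p z₀ with hRdef
  set K : ℝ := 1 + 2 * R / Real.sqrt d₀ with hKdef
  have hRpos : 0 < R := by positivity
  have hK1 : 1 ≤ K := by
    rw [hKdef]
    have : 0 ≤ 2 * R / Real.sqrt d₀ := by positivity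
    linarith
  have hKpos : 0 < K := by linarith
  refine ⟨-C - Real.log K - kobDist Ω z₀ o, V₁ ∩ U₀ ∩ ball p 1, ball q (dist p q / 2),
    Filter.inter_mem (Filter.inter_mem hV₁ hU₀) (ball_mem_nhds p one_pos),
    ball_mem_nhds q (by linarith), ?_⟩
  rintro z ⟨hzΩ, ⟨hzV₁, hzU₀⟩, hz1⟩ w ⟨hwΩ, hwW⟩
  -- w ∉ ball p r
  have hwU : w ∉ ball p r := by
    intro hwB
    rw [mem_ball] at hwB hwW
    have h1 : dist p q ≤ dist p w + dist w q := dist_triangle p w q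
    have h4 : r ≤ dist p q / 2 := min_le_left _ _
    have e1 : dist p w = dist w p := dist_comm p w
    linarith
  -- o ∉ ball p r
  have hoU : o ∉ ball p r := by
    intro hoB
    rw [mem_ball] at hoB
    have : dist p o < r := by rwa [dist_comm] at hoB
    have : r ≤ dist p o := min_le_right _ _
    linarith
  set d : ℝ := bdist Ω z with hddef
  have hd : 0 < d := bdist_pos hΩ hp hzΩ
  have hd1 : d < 1 := by
    have h1 : d ≤ dist z p := infDist_le_dist_of_mem hp
    have h2 : dist z p < 1 := mem_ball.1 hz1
    linarith
  -- lower bound for k(z,w)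
  have hlow : (1 / 2) * Real.log (1 / d) - C ≤ kobDist Ω z w :=
    hC z ⟨hzΩ, hzV₁⟩ w ⟨hwΩ, hwU⟩
  -- upper bound for k(z,o)
  have htri : kobDist Ω z o ≤ kobDist Ω z z₀ + kobDist Ω z₀ o :=
    kobDist_triangle Ω hzΩ hz₀Ω ho
  have hdini2 : kobDist Ω z z₀ ≤ Real.log (1 + 2 * ‖z - z₀‖ / Real.sqrt (d * d₀)) :=
    hdini' z ⟨hzΩ, hzU₀⟩ z₀ ⟨hz₀Ω, hz₀U₀⟩
  have hsd : (0:ℝ) < Real.sqrt d := Real.sqrt_pos.2 hd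
  have hsd₀ : (0:ℝ) < Real.sqrt d₀ := Real.sqrt_pos.2 hd₀
  have hsd1 : Real.sqrt d ≤ 1 := Real.sqrt_le_one.2 hd1.le
  have hzz₀ : ‖z - z₀‖ ≤ R := by
    have h1 : ‖z - z₀‖ = dist z z₀ := by rw [dist_eq_norm]
    have h2 : dist z z₀ ≤ dist z p + dist p z₀ := dist_triangle z p z₀
    have h3 : dist z p < 1 := mem_ball.1 hz1
    rw [h1, hRdef]; linarith
  have hquot : 1 + 2 * ‖z - z₀‖ / Real.sqrt (d * d₀) ≤ K / Real.sqrt d := by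
    rw [Real.sqrt_mul hd.le, hKdef]
    have e1 : (1 + 2 * R / Real.sqrt d₀) / Real.sqrt d
        = 1 / Real.sqrt d + 2 * R / (Real.sqrt d * Real.sqrt d₀) := by
      rw [add_div, div_div, mul_comm (Real.sqrt d₀) (Real.sqrt d)]
    rw [e1]
    have e2 : (1:ℝ) ≤ 1 / Real.sqrt d := by
      rw [le_div_iff₀ hsd]; linarith
    have e3 : 2 * ‖z - z₀‖ / (Real.sqrt d * Real.sqrt d₀)
        ≤ 2 * R / (Real.sqrt d * Real.sqrt d₀) := by
      gcongr
    linarith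
  have hlogle : Real.log (1 + 2 * ‖z - z₀‖ / Real.sqrt (d * d₀))
      ≤ Real.log K + (1 / 2) * Real.log (1 / d) := by
    have hpos : (0:ℝ) < 1 + 2 * ‖z - z₀‖ / Real.sqrt (d * d₀) := by positivity
    have h1 : Real.log (1 + 2 * ‖z - z₀‖ / Real.sqrt (d * d₀))
        ≤ Real.log (K / Real.sqrt d) := Real.log_le_log hpos hquot
    have h2 : Real.log (K / Real.sqrt d) = Real.log K - Real.log (Real.sqrt d) :=
      Real.log_div (ne_of_gt hKpos) (ne_of_gt hsd)
    have h3 : Real.log (Real.sqrt d) = Real.log d / 2 := Real.log_sqrt hd.le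
    have h4 : Real.log (1 / d) = - Real.log d := by
      rw [one_div, Real.log_inv]
    rw [h2, h3] at h1
    rw [h4]; linarith
  have hup : kobDist Ω z o ≤ Real.log K + (1 / 2) * Real.log (1 / d) + kobDist Ω z₀ o := by
    linarith
  linarith
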